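/- arXiv:1009.0484 — 2 statements merged into one kernel-verified Lean document; each statement's English description precedes it below -/
import Mathlib

section
/- For $n \ge 3$ odd, set $k = \frac{n-3}{2} \in \mathbb{N}_0$ and define $I(r,z) = \int_{-1}^1 \frac{(1-t^2)^{k}}{(1 - 2rt + r^2 + z^2)^{n/2}} \, dt$ for $r > 0$, $z > 0$. Then there exists a constant $C_k$ such that for all $r \in [1/2, 3/2]$ and $z > 0$, $I(r, z) \le C_k \left((1-r)^2 + z^2\right)^{-1/2}$. -/
open MeasureTheory Set

/-- For odd `n = 2k+3`, the kernel
`I(r,z) = ∫_{-1}^1 (1-t²)^k / (1-2rt+r²+z²)^{n/2} dt`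
satisfies `I(r,z) ≤ C ((1-r)² + z²)^{-1/2}` for `r ∈ [1/2,3/2]`, `z > 0`. -/
theorem stmt4 (n k : ℕ) (hnk : n = 2 * k + 3) :
    ∃ C > 0, ∀ r ∈ Icc (1/2 : ℝ) (3/2 : ℝ), ∀ z : ℝ, 0 < z →
      (∫ t in (-1 : ℝ)..1, (1 - t ^ 2) ^ k / (1 - 2*r*t + r ^ 2 + z ^ 2) ^ ((n : ℝ) / 2))
        ≤ C * ((1 - r) ^ 2 + z ^ 2) ^ (-(1/2) : ℝ) := by
  refine ⟨2^(k+1), by positivity, ?_⟩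
  rintro r ⟨hr1, hr2⟩ z hz
  have hr0 : (0:ℝ) < r := by linarith
  have ha2pos : (0:ℝ) < (1-r)^2 + z^2 := by positivity
  have hDpos : ∀ t ∈ Icc (-1:ℝ) 1, 0 < 1 - 2*r*t + r ^ 2 + z ^ 2 := by
    intro t ht
    nlinarith [ht.2, sq_nonneg (1-r), sq_nonneg z, mul_nonneg (by linarith [ht.2] : (0:ℝ) ≤ 1-t) (by linarith : (0:ℝ) ≤ 2*r)]
  have hexp : (n:ℝ)/2 = (k:ℝ) + 3/2 := by rw [hnk]; push_cast; ring
  set f : ℝ → ℝ := fun t => (1 - t ^ 2) ^ k / (1 - 2*r*t + r ^ 2 + z ^ 2) ^ ((n : ℝ) / 2) with hf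
  set g : ℝ → ℝ := fun t => 2^k * (1 - 2*r*t + r ^ 2 + z ^ 2) ^ (-(3/2) : ℝ) with hg
  -- continuity of D
  have hDcont : ContinuousOn (fun t : ℝ => 1 - 2*r*t + r ^ 2 + z ^ 2) (Icc (-1:ℝ) 1) := by
    fun_prop
  have hfc : ContinuousOn f (Icc (-1:ℝ) 1) := by
    apply ContinuousOn.div (by fun_prop)
    · exact hDcont.rpow_const (fun t ht => Or.inl (ne_of_gt (hDpos t ht)))
    · exact fun t ht => ne_of_gt (Real.rpow_pos_of_pos (hDpos t ht) _)
  have hgc : ContinuousOn g (Icc (-1:ℝ) 1) := by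
    apply ContinuousOn.mul continuousOn_const
    exact hDcont.rpow_const (fun t ht => Or.inl (ne_of_gt (hDpos t ht)))
  have huIcc : uIcc (-1:ℝ) 1 = Icc (-1:ℝ) 1 := uIcc_of_le (by norm_num)
  have hfi : IntervalIntegrable f volume (-1) 1 :=
    (huIcc ▸ hfc).intervalIntegrable
  have hgi : IntervalIntegrable g volume (-1) 1 :=
    (huIcc ▸ hgc).intervalIntegrable
  -- pointwise bound
  have hpt : ∀ t ∈ Icc (-1:ℝ) 1, f t ≤ g t := by
    intro t ht
    have hD := hDpos t ht
    simp only [hf, hg]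
    rw [div_le_iff₀ (Real.rpow_pos_of_pos hD _)]
    have hcomb : (2:ℝ)^k * (1 - 2*r*t + r ^ 2 + z ^ 2) ^ (-(3/2) : ℝ)
        * (1 - 2*r*t + r ^ 2 + z ^ 2) ^ ((n : ℝ) / 2)
        = (2 * (1 - 2*r*t + r ^ 2 + z ^ 2)) ^ k := by
      rw [mul_assoc, ← Real.rpow_add hD, mul_pow,
        ← Real.rpow_natCast (1 - 2*r*t + r ^ 2 + z ^ 2) k]
      congr 1
      rw [hexp]; ring
    rw [hcomb]
    apply pow_le_pow_left₀ (by nlinarith [ht.1, ht.2])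
    nlinarith [mul_nonneg (by linarith [ht.2] : (0:ℝ) ≤ 1-t) (by linarith [ht.2] : (0:ℝ) ≤ 4*r-1-t), sq_nonneg (1-r), sq_nonneg z]
  have hmono := intervalIntegral.integral_mono_on (by norm_num : (-1:ℝ) ≤ 1) hfi hgi hpt
  -- compute ∫ g via FTC
  set F : ℝ → ℝ := fun t => (2^k / r) * (1 - 2*r*t + r ^ 2 + z ^ 2) ^ (-(1/2) : ℝ) with hF
  have hderiv : ∀ t ∈ uIcc (-1:ℝ) 1, HasDerivAt F (g t) t := by
    intro t ht
    rw [huIcc] at ht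
    have hD := hDpos t ht
    have h1 : HasDerivAt (fun t : ℝ => 1 - 2*r*t + r ^ 2 + z ^ 2) (-(2*r)) t := by
      have : HasDerivAt (fun t : ℝ => 1 - 2*r*t + r ^ 2 + z ^ 2) (0 - 2*r*1 + 0 + 0) t := by
        apply HasDerivAt.add; apply HasDerivAt.add
        apply HasDerivAt.sub (hasDerivAt_const _ _)
        · exact (hasDerivAt_id t).const_mul (2*r)
        · exact hasDerivAt_const _ _
        · exact hasDerivAt_const _ _
      simpa using this
    have h2 := (h1.rpow_const (p := -(1/2)) (Or.inl (ne_of_gt hD))).const_mul ((2:ℝ)^k / r)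
    refine h2.congr_deriv ?_
    rw [hg]
    have : (-(1/2) : ℝ) - 1 = -(3/2) := by norm_num
    rw [this]
    field_simp
  have hcalc := intervalIntegral.integral_eq_sub_of_hasDerivAt hderiv hgi
  have hD1 : 1 - 2*r*1 + r ^ 2 + z ^ 2 = (1-r)^2 + z^2 := by ring
  have hbound : F 1 - F (-1) ≤ 2^(k+1) * ((1 - r) ^ 2 + z ^ 2) ^ (-(1/2) : ℝ) := by
    simp only [hF]
    rw [hD1]
    have h3 : (0:ℝ) ≤ (1 - 2*r*(-1) + r ^ 2 + z ^ 2) ^ (-(1/2) : ℝ) :=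
      Real.rpow_nonneg (le_of_lt (hDpos (-1) (by norm_num))) _
    have h4 : (0:ℝ) < ((1-r)^2 + z^2) ^ (-(1/2) : ℝ) := Real.rpow_pos_of_pos ha2pos _
    have h5 : (2:ℝ)^k / r ≤ 2^(k+1) := by
      rw [div_le_iff₀ hr0, pow_succ]
      nlinarith [pow_pos (by norm_num : (0:ℝ) < 2) k]
    calc (2:ℝ)^k / r * ((1-r)^2 + z^2) ^ (-(1/2) : ℝ)
          - 2^k / r * (1 - 2*r*(-1) + r ^ 2 + z ^ 2) ^ (-(1/2) : ℝ)
        ≤ 2^k / r * ((1-r)^2 + z^2) ^ (-(1/2) : ℝ) := by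
          have : (0:ℝ) ≤ 2^k / r * (1 - 2*r*(-1) + r ^ 2 + z ^ 2) ^ (-(1/2) : ℝ) :=
            mul_nonneg (by positivity) h3
          linarith
      _ ≤ 2^(k+1) * ((1-r)^2 + z^2) ^ (-(1/2) : ℝ) :=
          mul_le_mul_of_nonneg_right h5 (le_of_lt h4)
  calc (∫ t in (-1:ℝ)..1, f t) ≤ ∫ t in (-1:ℝ)..1, g t := hmono
    _ = F 1 - F (-1) := hcalc
    _ ≤ 2^(k+1) * ((1 - r) ^ 2 + z ^ 2) ^ (-(1/2) : ℝ) := hbound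
end

section
/- Define $I(r,z) = \int_{-1}^1 \frac{(1-t^2)^{-1/2}}{1 - 2rt + r^2 + z^2} \, dt$ (the case $n = 2$). Then there is a constant $C$ such that for all $r \in [1/2, 3/2]$ and $z > 0$, $I(r,z) \le C \left(|1-r| + z\right)^{-1}$. -/
open MeasureTheory Set

/-- Integrability of `(1-t)^{-1/2} / (a + (1-t))` on `[-1,1]`. -/
lemma aux_intg2 (a : ℝ) (ha : 0 < a) :
    IntervalIntegrable (fun t : ℝ => (1 - t) ^ (-(1/2) : ℝ) / (a + (1 - t)))
      volume (-1) 1 := by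
  have h0 : IntervalIntegrable (fun x : ℝ => x ^ (-(1/2) : ℝ)) volume 0 2 :=
    intervalIntegral.intervalIntegrable_rpow' (by norm_num)
  have h1 : IntervalIntegrable (fun t : ℝ => (1 - t) ^ (-(1/2) : ℝ)) volume (-1) 1 := by
    have h1' := (h0.comp_sub_left 1).symm
    norm_num at h1'
    exact h1'
  have h2 : ContinuousOn (fun t : ℝ => (a + (1 - t))⁻¹) (uIcc (-1 : ℝ) 1) := by
    apply ContinuousOn.inv₀ (by fun_prop)
    intro x hx
    rw [uIcc_of_le (by norm_num : (-1:ℝ) ≤ 1)] at hx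
    nlinarith [hx.2]
  have := h1.mul_continuousOn h2
  simpa [div_eq_mul_inv] using this

/-- Integrability of `(1+t)^{-1/2}` on `[-1,1]`. -/
lemma aux_intg1 :
    IntervalIntegrable (fun t : ℝ => (1 + t) ^ (-(1/2) : ℝ)) volume (-1) 1 := by
  have h0 : IntervalIntegrable (fun x : ℝ => x ^ (-(1/2) : ℝ)) volume 0 2 :=
    intervalIntegral.intervalIntegrable_rpow' (by norm_num)
  have h1 := h0.comp_add_left 1
  norm_num at h1
  exact h1

/-- Value bound for the arctan piece. -/
lemma aux_arctan (a : ℝ) (ha : 0 < a) :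
    ∫ t in (-1:ℝ)..1, (1 - t) ^ (-(1/2) : ℝ) / (a + (1 - t))
      ≤ Real.pi / Real.sqrt a := by
  set c := Real.sqrt a with hcdef
  have hc : 0 < c := Real.sqrt_pos.mpr ha
  have hc2 : c ^ 2 = a := Real.sq_sqrt ha.le
  set G : ℝ → ℝ := fun t => -(2 / c) * Real.arctan (Real.sqrt (1 - t) / c) with hGdef
  have hcont : ContinuousOn G (Icc (-1:ℝ) 1) := by
    apply Continuous.continuousOn
    exact continuous_const.mul (Real.continuous_arctan.comp
      ((Real.continuous_sqrt.comp (continuous_const.sub continuous_id)).div_const c))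
  have hderiv : ∀ x ∈ Ioo (-1:ℝ) 1,
      HasDerivAt G ((1 - x) ^ (-(1/2):ℝ) / (a + (1 - x))) x := by
    intro x hx
    have hx1 : 0 < 1 - x := by linarith [hx.2]
    have hs : 0 < Real.sqrt (1 - x) := Real.sqrt_pos.mpr hx1
    have hs2 : Real.sqrt (1 - x) ^ 2 = 1 - x := Real.sq_sqrt hx1.le
    have h1 : HasDerivAt (fun t : ℝ => 1 - t) (-1) x := by
      exact (hasDerivAt_id' x).const_sub 1
    have h2 : HasDerivAt (fun t : ℝ => Real.sqrt (1 - t))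
        (1 / (2 * Real.sqrt (1 - x)) * (-1)) x :=
      (Real.hasDerivAt_sqrt hx1.ne').comp x h1
    have h3 : HasDerivAt (fun t : ℝ => Real.sqrt (1 - t) / c)
        (1 / (2 * Real.sqrt (1 - x)) * (-1) / c) x := h2.div_const c
    have h4 : HasDerivAt (fun t : ℝ => Real.arctan (Real.sqrt (1 - t) / c))
        (1 / (1 + (Real.sqrt (1 - x) / c) ^ 2) * (1 / (2 * Real.sqrt (1 - x)) * (-1) / c)) x :=
      (Real.hasDerivAt_arctan _).comp x h3
    have h5 := h4.const_mul (-(2 / c))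
    refine h5.congr_deriv ?_
    symm
    rw [show (1 - x) ^ (-(1/2):ℝ) = (Real.sqrt (1 - x))⁻¹ by
      rw [Real.rpow_neg hx1.le, ← Real.sqrt_eq_rpow]]
    rw [← hc2, ← hs2]
    have hden : 0 < Real.sqrt (1 - x) ^ 2 + c ^ 2 := by positivity
    field_simp
    ring_nf
    rw [Real.sqrt_sq hs.le]
  have key := intervalIntegral.integral_eq_sub_of_hasDeriv_right_of_le
    (by norm_num : (-1:ℝ) ≤ 1) hcont
    (fun x hx => (hderiv x hx).hasDerivWithinAt) (aux_intg2 a ha)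
  rw [key]
  have e1 : G 1 = 0 := by simp [hGdef]
  have e2 : G (-1) = -(2 / c) * Real.arctan (Real.sqrt 2 / c) := by norm_num [hGdef]
  rw [e1, e2]
  have harct : Real.arctan (Real.sqrt 2 / c) ≤ Real.pi / 2 :=
    (Real.arctan_lt_pi_div_two _).le
  have heq : 0 - -(2 / c) * Real.arctan (Real.sqrt 2 / c)
      = (2 / c) * Real.arctan (Real.sqrt 2 / c) := by ring
  rw [heq]
  calc (2 / c) * Real.arctan (Real.sqrt 2 / c)
      ≤ (2 / c) * (Real.pi / 2) := by
        apply mul_le_mul_of_nonneg_left harct (by positivity)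
    _ = Real.pi / c := by ring

set_option maxHeartbeats 1000000 in
/-- The case `n = 2`: the kernel
`I(r,z) = ∫_{-1}^1 (1-t²)^{-1/2} / (1-2rt+r²+z²) dt`
satisfies `I(r,z) ≤ C (|1-r| + z)⁻¹` for `r ∈ [1/2,3/2]`, `z > 0`. -/
theorem stmt5 :
    ∃ C > 0, ∀ r ∈ Icc (1/2 : ℝ) (3/2 : ℝ), ∀ z : ℝ, 0 < z →
      (∫ t in (-1 : ℝ)..1, (1 - t ^ 2) ^ (-(1/2) : ℝ) / (1 - 2*r*t + r ^ 2 + z ^ 2))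
        ≤ C * (|1 - r| + z)⁻¹ := by
  refine ⟨10, by norm_num, ?_⟩
  intro r hr z hz
  obtain ⟨hr1, hr2⟩ := hr
  set b : ℝ := |1 - r| + z with hbdef
  have hbpos : 0 < b := by positivity
  have hs2 : Real.sqrt 2 ^ 2 = 2 := Real.sq_sqrt (by norm_num)
  have hs2pos : 0 < Real.sqrt 2 := Real.sqrt_pos.mpr (by norm_num)
  set a : ℝ := (b / Real.sqrt 2) ^ 2 with hadef
  have ha : 0 < a := by positivity
  have hsa : Real.sqrt a = b / Real.sqrt 2 := Real.sqrt_sq (by positivity)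
  have ha2 : 2 * a = b ^ 2 := by
    rw [hadef, div_pow, hs2]; field_simp
  have habs : |1 - r| ^ 2 = (1 - r) ^ 2 := sq_abs _
  clear_value a b
  -- denominator bound
  have hD : ∀ t ∈ Ioc (-1:ℝ) 1, a + (1 - t) ≤ 1 - 2*r*t + r ^ 2 + z ^ 2 := by
    intro t ht
    nlinarith [sq_nonneg (|1 - r| - z), mul_nonneg (by linarith : (0:ℝ) ≤ 2*r - 1)
      (by linarith [ht.2] : (0:ℝ) ≤ 1 - t)]
  set f : ℝ → ℝ := fun t => (1 - t ^ 2) ^ (-(1/2) : ℝ) / (1 - 2*r*t + r ^ 2 + z ^ 2) with hfdef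
  set g : ℝ → ℝ := fun t => (1 + t) ^ (-(1/2) : ℝ) / (a + 1)
      + (1 - t) ^ (-(1/2) : ℝ) / (a + (1 - t)) with hgdef
  have hg1 : IntervalIntegrable (fun t : ℝ => (1 + t) ^ (-(1/2) : ℝ) / (a+1))
      volume (-1) 1 := aux_intg1.div_const _
  have hgint : IntervalIntegrable g volume (-1) 1 := hg1.add (aux_intg2 a ha)
  -- pointwise bound
  have hfg : ∀ t ∈ Ioc (-1:ℝ) 1, f t ≤ g t := by
    intro t ht
    have h1t : 0 ≤ 1 - t := by linarith [ht.2]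
    have h1t' : 0 < 1 + t := by linarith [ht.1]
    have hsplit : (1 - t ^ 2) ^ (-(1/2) : ℝ)
        = (1 - t) ^ (-(1/2) : ℝ) * (1 + t) ^ (-(1/2) : ℝ) := by
      rw [show (1 - t^2 : ℝ) = (1 - t) * (1 + t) by ring, Real.mul_rpow h1t h1t'.le]
    have hDt := hD t ht
    have hDpos : 0 < 1 - 2*r*t + r ^ 2 + z ^ 2 := by nlinarith
    have hN1 : 0 ≤ (1 - t) ^ (-(1/2) : ℝ) := Real.rpow_nonneg h1t _
    have hN2 : 0 ≤ (1 + t) ^ (-(1/2) : ℝ) := Real.rpow_nonneg h1t'.le _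
    rcases le_or_gt t 0 with hts | hts
    · -- t ≤ 0 : use first term
      have hN1le : (1 - t) ^ (-(1/2) : ℝ) ≤ 1 :=
        Real.rpow_le_one_of_one_le_of_nonpos (by linarith) (by norm_num)
      have hd : a + 1 ≤ 1 - 2*r*t + r ^ 2 + z ^ 2 := by linarith
      have : f t ≤ (1 + t) ^ (-(1/2) : ℝ) / (a + 1) := by
        rw [hfdef]
        simp only
        rw [hsplit]
        exact div_le_div₀ hN2 (mul_le_of_le_one_left hN2 hN1le) (by linarith) hd
      refine this.trans ?_
      rw [hgdef]
      simp only
      have : 0 ≤ (1 - t) ^ (-(1/2) : ℝ) / (a + (1 - t)) := by positivity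
      linarith
    · -- t > 0 : use second term
      have hN2le : (1 + t) ^ (-(1/2) : ℝ) ≤ 1 :=
        Real.rpow_le_one_of_one_le_of_nonpos (by linarith) (by norm_num)
      have : f t ≤ (1 - t) ^ (-(1/2) : ℝ) / (a + (1 - t)) := by
        rw [hfdef]
        simp only
        rw [hsplit]
        exact div_le_div₀ hN1 (mul_le_of_le_one_right hN1 hN2le) (by linarith) hDt
      refine this.trans ?_
      rw [hgdef]
      simp only
      have : 0 ≤ (1 + t) ^ (-(1/2) : ℝ) / (a + 1) := by positivity
      linarith
  have hf0 : ∀ t ∈ Ioc (-1:ℝ) 1, 0 ≤ f t := by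
    intro t ht
    have h1t : 0 ≤ 1 - t^2 := by nlinarith [ht.1, ht.2]
    have hDpos : 0 < 1 - 2*r*t + r ^ 2 + z ^ 2 := by nlinarith [hD t ht, ht.2]
    exact div_nonneg (Real.rpow_nonneg h1t _) hDpos.le
  -- compare integrals
  have hle : (∫ t in (-1:ℝ)..1, f t) ≤ ∫ t in (-1:ℝ)..1, g t := by
    rw [intervalIntegral.integral_of_le (by norm_num : (-1:ℝ) ≤ 1),
      intervalIntegral.integral_of_le (by norm_num : (-1:ℝ) ≤ 1)]
    apply integral_mono_of_nonneg
    · exact (ae_restrict_iff' measurableSet_Ioc).mpr (Filter.Eventually.of_forall hf0)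
    · exact (intervalIntegrable_iff_integrableOn_Ioc_of_le (by norm_num)).mp hgint
    · exact (ae_restrict_iff' measurableSet_Ioc).mpr (Filter.Eventually.of_forall hfg)
  -- compute ∫ g
  have hgval : (∫ t in (-1:ℝ)..1, g t)
      ≤ 2 * Real.sqrt 2 / (a + 1) + Real.pi / Real.sqrt a := by
    rw [hgdef]
    rw [intervalIntegral.integral_add hg1 (aux_intg2 a ha)]
    have hpart1 : (∫ t in (-1:ℝ)..1, (1 + t) ^ (-(1/2) : ℝ) / (a+1))
        = 2 * Real.sqrt 2 / (a + 1) := by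
      rw [intervalIntegral.integral_div]
      congr 1
      have hshift : (∫ t in (-1:ℝ)..1, (1 + t) ^ (-(1/2) : ℝ))
          = ∫ x in (0:ℝ)..2, x ^ (-(1/2) : ℝ) := by
        have h := intervalIntegral.integral_comp_add_left
          (a := (-1:ℝ)) (b := 1) (fun x : ℝ => x ^ (-(1/2) : ℝ)) 1
        norm_num at h
        exact h
      rw [hshift, integral_rpow (Or.inl (by norm_num))]
      rw [Real.zero_rpow (by norm_num), Real.sqrt_eq_rpow]
      norm_num
      ring
    rw [hpart1]
    have := aux_arctan a ha
    linarith
  -- final numeric bound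
  clear_value f g
  have hsa' : Real.sqrt a * Real.sqrt 2 = b := by
    rw [hsa]; field_simp
  have hsapos : 0 < Real.sqrt a := Real.sqrt_pos.mpr ha
  have h1 : 2 * Real.sqrt 2 / (a + 1) ≤ 2 * Real.sqrt 2 / Real.sqrt a := by
    apply div_le_div_of_nonneg_left (by positivity) hsapos
    nlinarith [Real.sq_sqrt ha.le, sq_nonneg (Real.sqrt a - 1/2)]
  have h2 : 2 * Real.sqrt 2 / Real.sqrt a + Real.pi / Real.sqrt a ≤ 10 * b⁻¹ := by
    rw [← add_div, ← hsa']
    rw [div_le_iff₀ (by positivity)]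
    have hpi : Real.pi ≤ 4 := Real.pi_le_four
    have hs2le : Real.sqrt 2 ≤ 3/2 := by nlinarith [hs2, hs2pos]
    have hexp : 10 * (Real.sqrt a * Real.sqrt 2)⁻¹ * Real.sqrt a = 10 / Real.sqrt 2 := by
      field_simp
    rw [hexp, le_div_iff₀ hs2pos]
    nlinarith [hs2, mul_le_mul hpi hs2le (Real.sqrt_nonneg 2) (by norm_num : (0:ℝ) ≤ 4)]
  calc (∫ t in (-1:ℝ)..1, f t) ≤ ∫ t in (-1:ℝ)..1, g t := hle
    _ ≤ 2 * Real.sqrt 2 / (a + 1) + Real.pi / Real.sqrt a := hgval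
    _ ≤ 2 * Real.sqrt 2 / Real.sqrt a + Real.pi / Real.sqrt a := by
        have := h1; linarith
    _ ≤ 10 * b⁻¹ := h2
end
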